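/- Structure of the modal decomposition of the state-energy Gramian: suppose A is Hurwitz and let P_x := −∑_{i,j=1}^n R_iᴴ R_j/(conj(λ_i) + λ_j) (the solution of Aᴴ P_x + P_x A = −I), and set P̄_z := Uᴴ P_x U. Then: (a) Λᴴ P̄_z + P̄_z Λ = −Uᴴ U; (b) for each i, the matrix P̄_{z i} := −{ ∑_{j=1}^n ((u_iᴴ u_j)/(conj(λ_i) + λ_j)) e_i e_jᵀ }_H satisfies P̄_{z i} = ½( P̄_z e_i e_iᵀ + e_i e_iᵀ P̄_z ); (c) ∑_{i=1}^n P̄_{z i} = P̄_z. -/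

import Mathlib

open Matrix BigOperators

/-- The residue matrix `R_i = u_i v_iᵀ`, with entries `(R_i)_{kl} = U_{ki} V_{il}`. -/
noncomputable def residue {n : ℕ} (U V : Matrix (Fin n) (Fin n) ℂ) (i : Fin n) :
    Matrix (Fin n) (Fin n) ℂ :=
  Matrix.vecMulVec (fun k => U k i) (fun l => V i l)

/-- The Hermitian part `{M}_H = ½(M + Mᴴ)` of a square complex matrix. -/
noncomputable def hermPart {n : ℕ} (M : Matrix (Fin n) (Fin n) ℂ) :
    Matrix (Fin n) (Fin n) ℂ :=
  (1 / 2 : ℂ) • (M + Mᴴ)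

/-- The modal-contribution matrix
`P̄_{z i} := −{ ∑_j ((u_iᴴ u_j)/(conj(λ_i) + λ_j)) e_i e_jᵀ }_H`. -/
noncomputable def modalContrib {n : ℕ} (U : Matrix (Fin n) (Fin n) ℂ) (lam : Fin n → ℂ)
    (i : Fin n) : Matrix (Fin n) (Fin n) ℂ :=
  -hermPart (∑ j, Matrix.single i j
    ((∑ k, starRingEnd ℂ (U k i) * U k j) / (starRingEnd ℂ (lam i) + lam j)))

theorem aux_key_lemma (n : ℕ)
    (U V : Matrix (Fin n) (Fin n) ℂ)
    (hVU : V * U = 1) (i j : Fin n) :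
    Uᴴ * ((residue U V i)ᴴ * residue U V j) * U =
    Matrix.single i j (∑ k, starRingEnd ℂ (U k i) * U k j) := by
  have hVU' : ∀ a b : Fin n, (∑ p, V a p * U p b) = if a = b then (1:ℂ) else 0 := by
    intro a b
    have := congrFun (congrFun hVU a) b
    simpa [Matrix.mul_apply, Matrix.one_apply] using this
  ext a b
  simp only [residue, Matrix.mul_apply, Matrix.conjTranspose_apply, Matrix.vecMulVec_apply,
    Matrix.single, Matrix.of_apply]
  calc ∑ x : Fin n, (∑ x1 : Fin n, star (U x1 a) * ∑ x2 : Fin n,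
          star (U x2 i * V i x1) * (U x2 j * V j x)) * U x b
      = ∑ x : Fin n, (∑ x1 : Fin n, star (U x1 a) * (star (V i x1) *
          ((∑ x2, star (U x2 i) * U x2 j) * V j x))) * U x b := by
        refine Finset.sum_congr rfl fun x _ => ?_
        congr 1
        refine Finset.sum_congr rfl fun x1 _ => ?_
        congr 1
        rw [Finset.sum_mul, Finset.mul_sum]
        exact Finset.sum_congr rfl fun x2 _ => by simp only [star_mul']; ring
    _ = ∑ x : Fin n, ((∑ x1 : Fin n, star (V i x1 * U x1 a)) *
          ((∑ x2, star (U x2 i) * U x2 j) * V j x)) * U x b := by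
        refine Finset.sum_congr rfl fun x _ => ?_
        congr 1
        conv_rhs => rw [Finset.sum_mul]
        exact Finset.sum_congr rfl fun x1 _ => by simp only [star_mul']; ring
    _ = (∑ x1 : Fin n, star (V i x1 * U x1 a)) * ((∑ x2, star (U x2 i) * U x2 j) *
          (∑ x, V j x * U x b)) := by
        conv_rhs => rw [Finset.mul_sum, Finset.mul_sum]
        exact Finset.sum_congr rfl fun x _ => by ring
    _ = (if i = a then (1:ℂ) else 0) * ((∑ x2, star (U x2 i) * U x2 j) *
          (if j = b then (1:ℂ) else 0)) := by
        rw [← star_sum, hVU' i a, hVU' j b]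
        by_cases h : i = a <;> simp [h]
    _ = (if i = a ∧ j = b then ∑ k : Fin n, (starRingEnd ℂ) (U k i) * U k j else 0) := by
        simp only [starRingEnd_apply]
        by_cases h1 : i = a <;> by_cases h2 : j = b <;> simp [h1, h2]

/-- Structure of the modal decomposition of the state-energy Gramian: with
`P_x := −∑_{i,j} R_iᴴ R_j/(conj(λ_i)+λ_j)` (the solution of `Aᴴ P_x + P_x A = −I`) and
`P̄_z := Uᴴ P_x U`, one has (a) `Λᴴ P̄_z + P̄_z Λ = −Uᴴ U`;
(b) `P̄_{z i} = ½(P̄_z e_i e_iᵀ + e_i e_iᵀ P̄_z)` for every `i`; (c) `∑_i P̄_{z i} = P̄_z`. -/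
theorem modal_decomposition_state_energy_gramian
    (n : ℕ) (hn : 1 ≤ n)
    (A U V : Matrix (Fin n) (Fin n) ℂ) (lam : Fin n → ℂ)
    (hUV : U * V = 1) (hVU : V * U = 1)
    (hA : A = U * Matrix.diagonal lam * V)
    (hHur : ∀ i, (lam i).re < 0)
    (Px Pz : Matrix (Fin n) (Fin n) ℂ)
    (hPx : Px = -∑ i, ∑ j, (starRingEnd ℂ (lam i) + lam j)⁻¹ •
        ((residue U V i)ᴴ * residue U V j))
    (hPz : Pz = Uᴴ * Px * U) :
    (Aᴴ * Px + Px * A = -1) ∧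
    ((Matrix.diagonal lam)ᴴ * Pz + Pz * Matrix.diagonal lam = -(Uᴴ * U)) ∧
    (∀ i, modalContrib U lam i =
        (1 / 2 : ℂ) • (Pz * Matrix.single i i (1 : ℂ) +
          Matrix.single i i (1 : ℂ) * Pz)) ∧
    (∑ i, modalContrib U lam i = Pz) := by
  set s : Fin n → Fin n → ℂ := fun i j => ∑ k, starRingEnd ℂ (U k i) * U k j with hs
  set d : Fin n → Fin n → ℂ := fun i j => starRingEnd ℂ (lam i) + lam j with hdd
  have hd : ∀ a b, d a b ≠ 0 := by
    intro a b h
    have := congrArg Complex.re h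
    simp [hdd, Complex.add_re, Complex.conj_re] at this
    nlinarith [hHur a, hHur b]
  -- the matrix form of Pz
  have hPzM : Pz = -∑ i, ∑ j, (d i j)⁻¹ • Matrix.single i j (s i j) := by
    rw [hPz, hPx]
    simp only [Matrix.neg_mul, Matrix.mul_neg, Matrix.mul_sum, Matrix.sum_mul,
      Matrix.mul_smul, Matrix.smul_mul]
    refine congrArg Neg.neg ?_
    refine Finset.sum_congr rfl fun i _ => Finset.sum_congr rfl fun j _ => ?_
    rw [aux_key_lemma n U V hVU i j]
  -- entrywise formula for Pz
  have hPzE : ∀ a b, Pz a b = -(s a b / d a b) := by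
    intro a b
    rw [hPzM]
    simp only [Matrix.neg_apply, Matrix.sum_apply, Matrix.smul_apply,
      Matrix.single, Matrix.of_apply, smul_eq_mul, mul_ite, mul_zero, ite_and]
    rw [div_eq_inv_mul]
    refine congrArg Neg.neg ?_
    rw [Finset.sum_eq_single a]
    · rw [Finset.sum_eq_single b]
      · simp
      · intro j _ hj; simp [hj]
      · simp
    · intro i _ hi
      exact Finset.sum_eq_zero fun j _ => by simp [hi]
    · simp
  have hsd : ∀ a b, s a b / d a b = -Pz a b := by
    intro a b; rw [hPzE]; ring
  -- Pz is Hermitian (entrywise)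
  have hherm : ∀ a b, starRingEnd ℂ (Pz b a) = Pz a b := by
    intro a b
    have h1 : starRingEnd ℂ (s b a) = s a b := by
      show starRingEnd ℂ (∑ k, starRingEnd ℂ (U k b) * U k a)
          = ∑ k, starRingEnd ℂ (U k a) * U k b
      rw [map_sum]
      refine Finset.sum_congr rfl fun k _ => ?_
      rw [RingHom.map_mul, Complex.conj_conj, mul_comm]
    have h2 : starRingEnd ℂ (d b a) = d a b := by
      show starRingEnd ℂ (starRingEnd ℂ (lam b) + lam a)
          = starRingEnd ℂ (lam a) + lam b
      rw [map_add, Complex.conj_conj, add_comm]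
    rw [hPzE, hPzE, map_neg, map_div₀, h1, h2]
  have hsUU : ∀ a b, (Uᴴ * U) a b = s a b := by
    intro a b
    simp [Matrix.mul_apply, Matrix.conjTranspose_apply, hs]
  -- (a2)
  have ha2 : (Matrix.diagonal lam)ᴴ * Pz + Pz * Matrix.diagonal lam = -(Uᴴ * U) := by
    ext a b
    have e1 : ((Matrix.diagonal lam)ᴴ * Pz) a b = starRingEnd ℂ (lam a) * Pz a b := by
      rw [Matrix.diagonal_conjTranspose, Matrix.diagonal_mul]
      simp
    have e2 : (Pz * Matrix.diagonal lam) a b = Pz a b * lam b := Matrix.mul_diagonal _ _ _ _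
    rw [Matrix.add_apply, e1, e2, Matrix.neg_apply, hsUU]
    calc starRingEnd ℂ (lam a) * Pz a b + Pz a b * lam b = d a b * Pz a b := by
          simp only [hdd]; ring
      _ = d a b * (-(s a b / d a b)) := by rw [hPzE]
      _ = -(s a b) := by rw [mul_neg, mul_div_cancel₀ _ (hd a b)]
  -- (a1)
  have h3 : Vᴴ * Uᴴ = 1 := by rw [← Matrix.conjTranspose_mul, hUV, Matrix.conjTranspose_one]
  have h4 : Uᴴ * Vᴴ = 1 := by rw [← Matrix.conjTranspose_mul, hVU, Matrix.conjTranspose_one]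
  have hPx' : Px = Vᴴ * Pz * V := by
    rw [hPz]
    simp only [← Matrix.mul_assoc]
    rw [h3, Matrix.one_mul, Matrix.mul_assoc, hUV, Matrix.mul_one]
  have ha1 : Aᴴ * Px + Px * A = -1 := by
    rw [hA, hPx']
    simp only [Matrix.conjTranspose_mul]
    simp only [← Matrix.mul_assoc]
    rw [Matrix.mul_assoc (Vᴴ * (Matrix.diagonal lam)ᴴ) Uᴴ Vᴴ, h4, Matrix.mul_one]
    rw [Matrix.mul_assoc (Vᴴ * Pz) V U, hVU, Matrix.mul_one]
    have expand : Vᴴ * (Matrix.diagonal lam)ᴴ * Pz * V + Vᴴ * Pz * Matrix.diagonal lam * V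
        = Vᴴ * ((Matrix.diagonal lam)ᴴ * Pz + Pz * Matrix.diagonal lam) * V := by
      rw [Matrix.mul_add, Matrix.add_mul]
      simp only [Matrix.mul_assoc]
    rw [expand, ha2]
    rw [Matrix.mul_neg, Matrix.neg_mul]
    simp only [← Matrix.mul_assoc]
    rw [h3, Matrix.one_mul, hUV]
  -- (b)
  have hM : ∀ (i a b : Fin n),
      (∑ j, Matrix.single i j (s i j / d i j)) a b
        = if i = a then s i b / d i b else 0 := by
    intro i a b
    simp only [Matrix.sum_apply, Matrix.single, Matrix.of_apply, ite_and]
    by_cases h : i = a <;> simp [h]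
  have hE1 : ∀ (i a b : Fin n), (Pz * Matrix.single i i (1:ℂ)) a b
      = if i = b then Pz a i else 0 := by
    intro i a b
    simp only [Matrix.mul_apply, Matrix.single, Matrix.of_apply, mul_ite, mul_one,
      mul_zero, ite_and]
    by_cases h : i = b <;> simp [h, Finset.sum_ite_eq]
  have hE2 : ∀ (i a b : Fin n), (Matrix.single i i (1:ℂ) * Pz) a b
      = if i = a then Pz i b else 0 := by
    intro i a b
    simp only [Matrix.mul_apply, Matrix.single, Matrix.of_apply, ite_mul, one_mul,
      zero_mul, ite_and]
    by_cases h : i = a <;> simp [h, Finset.sum_ite_eq]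
  have hb : ∀ i, modalContrib U lam i =
      (1 / 2 : ℂ) • (Pz * Matrix.single i i (1 : ℂ) +
        Matrix.single i i (1 : ℂ) * Pz) := by
    intro i
    ext a b
    have lhs : modalContrib U lam i a b
        = -((1/2 : ℂ) * ((if i = a then s i b / d i b else 0)
            + star (if i = b then s i a / d i a else 0))) := by
      simp only [modalContrib, hermPart, Matrix.neg_apply, Matrix.smul_apply,
        Matrix.add_apply, Matrix.conjTranspose_apply, smul_eq_mul]
      rw [hM, hM]
    rw [lhs, Matrix.smul_apply, Matrix.add_apply, hE1, hE2, smul_eq_mul]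
    by_cases h1 : i = a
    · subst h1
      by_cases h2 : i = b
      · subst h2
        simp only [eq_self_iff_true, if_true]
        rw [hsd, star_neg, ← starRingEnd_apply, hherm]
        ring
      · simp only [eq_self_iff_true, if_true, if_neg h2, star_zero, add_zero, zero_add]
        rw [hsd]; ring
    · by_cases h2 : i = b
      · subst h2
        simp only [if_neg h1, eq_self_iff_true, if_true, star_zero, zero_add, add_zero]
        rw [hsd, star_neg, ← starRingEnd_apply, hherm]
        ring
      · simp [if_neg h1, if_neg h2]
  refine ⟨ha1, ha2, hb, ?_⟩
  -- (c)
  have hI : (∑ i, Matrix.single i i (1:ℂ)) = (1 : Matrix (Fin n) (Fin n) ℂ) := by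
    ext a b
    simp only [Matrix.sum_apply, Matrix.single, Matrix.of_apply, Matrix.one_apply,
      ite_and, Finset.sum_ite_eq', Finset.mem_univ, if_true]
  calc ∑ i, modalContrib U lam i
      = ∑ i, (1 / 2 : ℂ) • (Pz * Matrix.single i i (1 : ℂ) +
          Matrix.single i i (1 : ℂ) * Pz) := Finset.sum_congr rfl fun i _ => hb i
    _ = (1 / 2 : ℂ) • (Pz * (∑ i, Matrix.single i i (1:ℂ)) +
          (∑ i, Matrix.single i i (1:ℂ)) * Pz) := by
        rw [← Finset.smul_sum, Finset.sum_add_distrib, ← Matrix.mul_sum, ← Matrix.sum_mul]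
    _ = Pz := by
        rw [hI, Matrix.mul_one, Matrix.one_mul, ← two_smul ℂ Pz, smul_smul]
        norm_num
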